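/- arXiv:1908.03874 — 2 statements merged into one kernel-verified Lean document; each statement's English description precedes it below -/
import Mathlib

section
/- Fix 0 < q < 1 and define f : (q,1) → ℝ by f(r) = (1 − r²) ∏_{j=1}^{∞} [ ((1 − q^{2j} r²)(1 − q^{2j}/r²)) / (1 − q^{2j})² ]^{(−1)^j}. Then the infinite product converges for every r ∈ (q,1), f(r) → 0 as r → 1⁻, and f(r) → +∞ as r → q⁺. -/
/-- The `j`-th factor (for `j ≥ 1`) of the radial-slit Mityuk radius product for
the annulus `{q < |z| < 1}`, with the alternating exponent `(−1)^j`. -/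
noncomputable def mityukFactorRad (q r : ℝ) (j : ℕ) : ℝ :=
  (((1 - q ^ (2 * j) * r ^ 2) * (1 - q ^ (2 * j) / r ^ 2)) / (1 - q ^ (2 * j)) ^ 2)
    ^ ((-1 : ℤ) ^ j)

/-- Mityuk's radius for the annulus with respect to the radial-slit canonical
domain, `f(r) = (1 − r²) ∏_{j=1}^∞ [(1 − q^{2j} r²)(1 − q^{2j}/r²)/(1 − q^{2j})²]^{(−1)^j}`. -/
noncomputable def mityukRadiusRad (q r : ℝ) : ℝ :=
  (1 - r ^ 2) * ∏' j : ℕ, mityukFactorRad q r (j + 1)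

open Real Filter Set

/-- The base of the `n`-th factor. -/
noncomputable def mcf (q r : ℝ) (n : ℕ) : ℝ :=
  ((1 - q ^ (2 * n) * r ^ 2) * (1 - q ^ (2 * n) / r ^ 2)) / (1 - q ^ (2 * n)) ^ 2

/-- The log of the `(j+1)`-st factor. -/
noncomputable def mgS (q r : ℝ) (j : ℕ) : ℝ :=
  (-1 : ℝ) ^ (j + 1) * Real.log (mcf q r (j + 1))

lemma mcf_pieces_pos {q r : ℝ} (hq0 : 0 < q) (hq1 : q < 1) (hr : r ∈ Set.Ioo q 1) {n : ℕ}
    (hn : 1 ≤ n) :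
    0 < 1 - q ^ (2 * n) * r ^ 2 ∧ 0 < 1 - q ^ (2 * n) / r ^ 2 ∧ 0 < 1 - q ^ (2 * n) := by
  obtain ⟨hqr, hr1⟩ := hr
  have hr0 : 0 < r := hq0.trans hqr
  have hp0 : 0 < q ^ (2 * n) := pow_pos hq0 _
  have hp1 : q ^ (2 * n) ≤ q ^ 2 := pow_le_pow_of_le_one hq0.le hq1.le (by omega)
  have hq2 : q ^ 2 < r ^ 2 := by nlinarith
  have hr2 : r ^ 2 < 1 := by nlinarith
  have hA : q ^ (2 * n) * r ^ 2 < 1 := by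
    nlinarith [mul_le_mul_of_nonneg_right hp1 (sq_nonneg r)]
  refine ⟨by linarith, ?_, by nlinarith⟩
  have : q ^ (2 * n) / r ^ 2 < 1 := by
    rw [div_lt_one (by positivity)]; nlinarith
  linarith

lemma mcf_pos {q r : ℝ} (hq0 : 0 < q) (hq1 : q < 1) (hr : r ∈ Set.Ioo q 1) {n : ℕ}
    (hn : 1 ≤ n) : 0 < mcf q r n := by
  obtain ⟨hA, hB, hD⟩ := mcf_pieces_pos hq0 hq1 hr hn
  exact div_pos (mul_pos hA hB) (by positivity)

lemma factor_eq_exp {q r : ℝ} {n : ℕ} (hc : 0 < mcf q r n) :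
    mityukFactorRad q r n = Real.exp ((-1 : ℝ) ^ n * Real.log (mcf q r n)) := by
  have h : mityukFactorRad q r n = (mcf q r n) ^ ((-1 : ℤ) ^ n) := rfl
  rw [h]
  rcases Nat.even_or_odd n with he | ho
  · rw [he.neg_one_pow, he.neg_one_pow, zpow_one, one_mul, Real.exp_log hc]
  · rw [ho.neg_one_pow, ho.neg_one_pow, zpow_neg_one, neg_one_mul, Real.exp_neg,
      Real.exp_log hc]

lemma abs_log_one_sub_le {x m : ℝ} (hx : 0 ≤ x) (hxm : x ≤ m) (hm : m < 1) :
    |Real.log (1 - x)| ≤ x / (1 - m) := by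
  have h1 : 0 < 1 - x := by linarith
  have h2 : 0 < 1 - m := by linarith
  rw [abs_of_nonpos (Real.log_nonpos (by linarith) (by linarith))]
  rw [show -Real.log (1 - x) = Real.log (1 - x)⁻¹ from (Real.log_inv _).symm]
  calc Real.log (1 - x)⁻¹ ≤ (1 - x)⁻¹ - 1 := Real.log_le_sub_one_of_pos (by positivity)
    _ = x / (1 - x) := by field_simp; ring
    _ ≤ x / (1 - m) := by gcongr

lemma abs_log_mcf_le {q r m : ℝ} {n : ℕ} (hq0 : 0 < q) (hr0 : 0 < r) (hr1 : r ≤ 1)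
    (hB : q ^ (2 * n) / r ^ 2 ≤ m) (hm : m < 1) :
    |Real.log (mcf q r n)| ≤ 4 * (q ^ (2 * n) / r ^ 2) / (1 - m) := by
  set t := q ^ (2 * n) with ht
  have ht0 : 0 < t := pow_pos hq0 _
  have hr2 : 0 < r ^ 2 := by positivity
  have hr21 : r ^ 2 ≤ 1 := by nlinarith
  have hu : t * r ^ 2 ≤ t / r ^ 2 := by
    rw [le_div_iff₀ hr2]
    nlinarith [mul_le_mul_of_nonneg_left (mul_le_one₀ hr21 hr2.le hr21) ht0.le]
  have hw : t ≤ t / r ^ 2 := by rw [le_div_iff₀ hr2]; nlinarith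
  have hmm : 0 < 1 - m := by linarith
  have hApos : 0 < 1 - t * r ^ 2 := by
    have := le_trans hu hB; nlinarith
  have hBpos : 0 < 1 - t / r ^ 2 := by linarith [lt_of_le_of_lt hB hm]
  have hDpos : 0 < 1 - t := by
    have := le_trans hw hB; nlinarith
  have hlog : Real.log (mcf q r n)
      = Real.log (1 - t * r ^ 2) + Real.log (1 - t / r ^ 2) - 2 * Real.log (1 - t) := by
    unfold mcf
    rw [← ht, Real.log_div (by positivity) (by positivity), Real.log_mul hApos.ne' hBpos.ne',
      Real.log_pow]
    push_cast; ring
  rw [hlog]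
  have b1 := abs_log_one_sub_le (by positivity) (le_trans hu hB) hm
  have b2 := abs_log_one_sub_le (le_of_lt (by positivity : (0:ℝ) < t / r ^ 2)) hB hm
  have b3 := abs_log_one_sub_le ht0.le (le_trans hw hB) hm
  have tri : |Real.log (1 - t * r ^ 2) + Real.log (1 - t / r ^ 2) - 2 * Real.log (1 - t)|
      ≤ |Real.log (1 - t * r ^ 2)| + |Real.log (1 - t / r ^ 2)| + 2 * |Real.log (1 - t)| := by
    have h1 := abs_add_le (Real.log (1 - t * r ^ 2)) (Real.log (1 - t / r ^ 2))
    have h2 : |Real.log (1 - t * r ^ 2) + Real.log (1 - t / r ^ 2) - 2 * Real.log (1 - t)|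
        ≤ |Real.log (1 - t * r ^ 2) + Real.log (1 - t / r ^ 2)| + |2 * Real.log (1 - t)| := by
      rw [sub_eq_add_neg, ← abs_neg (2 * Real.log (1 - t))]
      exact abs_add_le (Real.log (1 - t * r ^ 2) + Real.log (1 - t / r ^ 2)) (-(2 * Real.log (1 - t)))
    have h3 : |2 * Real.log (1 - t)| = 2 * |Real.log (1 - t)| := by
      rw [abs_mul]; norm_num
    linarith
  have hdiv1 : t * r ^ 2 / (1 - m) ≤ t / r ^ 2 / (1 - m) := by gcongr
  have hdiv2 : t / (1 - m) ≤ t / r ^ 2 / (1 - m) := by gcongr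
  have : 4 * (t / r ^ 2) / (1 - m) = t / r ^ 2 / (1 - m) + t / r ^ 2 / (1 - m)
      + 2 * (t / r ^ 2 / (1 - m)) := by ring
  rw [this]
  linarith

/-- Uniform-in-`r` version. -/
lemma abs_log_mcf_le' {q s r m : ℝ} {n : ℕ} (hq0 : 0 < q) (hs0 : 0 < s) (hsr : s ≤ r)
    (hr1 : r ≤ 1) (hB : q ^ (2 * n) / s ^ 2 ≤ m) (hm : m < 1) :
    |Real.log (mcf q r n)| ≤ 4 * (q ^ (2 * n) / s ^ 2) / (1 - m) := by
  have hr0 : 0 < r := lt_of_lt_of_le hs0 hsr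
  have hs2 : s ^ 2 ≤ r ^ 2 := by nlinarith
  have hle : q ^ (2 * n) / r ^ 2 ≤ q ^ (2 * n) / s ^ 2 := by
    rw [div_le_div_iff₀ (by positivity) (by positivity)]
    nlinarith [mul_le_mul_of_nonneg_left hs2 (pow_pos hq0 (2 * n)).le]
  refine (abs_log_mcf_le hq0 hr0 hr1 (hle.trans hB) hm).trans ?_
  have hmm : 0 < 1 - m := by linarith
  gcongr

lemma mgS_summable {q r : ℝ} (hq0 : 0 < q) (hq1 : q < 1) (hr : r ∈ Set.Ioo q 1) :
    Summable (mgS q r) := by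
  obtain ⟨hqr, hr1⟩ := hr
  have hr0 : 0 < r := hq0.trans hqr
  set m : ℝ := q ^ 2 / r ^ 2 with hm
  have hm1 : m < 1 := by
    rw [hm, div_lt_one (by positivity)]; nlinarith
  have hmm : 0 < 1 - m := by linarith
  have hbd : ∀ j : ℕ, ‖mgS q r j‖ ≤ (4 * (q ^ 2 / r ^ 2) / (1 - m)) * (q ^ 2) ^ j := by
    intro j
    have hp1 : q ^ (2 * (j + 1)) / r ^ 2 ≤ m := by
      rw [hm]
      have h2j : q ^ (2 * (j + 1)) ≤ q ^ 2 := pow_le_pow_of_le_one hq0.le hq1.le (by omega)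
      exact (div_le_div_iff_of_pos_right (by positivity)).2 h2j
    have := abs_log_mcf_le' hq0 hr0 le_rfl hr1.le hp1 hm1
    have heq : ‖mgS q r j‖ = |Real.log (mcf q r (j + 1))| := by
      rw [mgS, Real.norm_eq_abs, abs_mul, abs_pow, abs_neg, abs_one, one_pow, one_mul]
    rw [heq]
    refine this.trans (le_of_eq ?_)
    rw [pow_mul, pow_succ]
    ring
  exact Summable.of_norm_bounded
    ((summable_geometric_of_lt_one (by positivity) (by nlinarith)).mul_left _) hbd

lemma hasProd_factors {q r : ℝ} (hq0 : 0 < q) (hq1 : q < 1) (hr : r ∈ Set.Ioo q 1) :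
    HasProd (fun j : ℕ => mityukFactorRad q r (j + 1)) (Real.exp (∑' j, mgS q r j)) := by
  have hg := mgS_summable hq0 hq1 hr
  have he : (fun j : ℕ => mityukFactorRad q r (j + 1)) = Real.exp ∘ mgS q r := by
    funext j
    exact factor_eq_exp (mcf_pos hq0 hq1 hr (by omega))
  rw [he]
  exact hg.hasSum.rexp

lemma mityukRadiusRad_eq {q r : ℝ} (hq0 : 0 < q) (hq1 : q < 1) (hr : r ∈ Set.Ioo q 1) :
    mityukRadiusRad q r = (1 - r ^ 2) * Real.exp (∑' j, mgS q r j) := by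
  rw [mityukRadiusRad, (hasProd_factors hq0 hq1 hr).tprod_eq]

/-- For `0 < q < 1`, the alternating product defining `f(r)` converges
for every `r ∈ (q,1)`, `f(r) → 0` as `r → 1⁻`, and `f(r) → +∞` as `r → q⁺`. -/
theorem mityuk_stmt7 (q : ℝ) (hq0 : 0 < q) (hq1 : q < 1) :
    (∀ r ∈ Set.Ioo q 1, Multipliable (fun j : ℕ => mityukFactorRad q r (j + 1))) ∧
    Filter.Tendsto (mityukRadiusRad q) (nhdsWithin 1 (Set.Ioo q 1)) (nhds 0) ∧
    Filter.Tendsto (mityukRadiusRad q) (nhdsWithin q (Set.Ioo q 1)) Filter.atTop := by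
  have hq2 : q ^ 2 < 1 := by nlinarith
  set s : ℝ := (1 + q) / 2 with hs
  have hqs : q < s := by rw [hs]; linarith
  have hs1 : s < 1 := by rw [hs]; linarith
  have hs0 : 0 < s := by rw [hs]; linarith
  refine ⟨fun r hr => (hasProd_factors hq0 hq1 hr).multipliable, ?_, ?_⟩
  · -- limit at 1
    set m : ℝ := q ^ 2 / s ^ 2 with hm
    have hm1 : m < 1 := by
      rw [hm, div_lt_one (by positivity)]; nlinarith
    have hmm : 0 < 1 - m := by linarith
    have hbsum : Summable (fun j : ℕ => 4 * (q ^ (2 * (j + 1)) / s ^ 2) / (1 - m)) := by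
      refine ((summable_geometric_of_lt_one (by positivity) hq2).mul_left
        (4 * q ^ 2 / s ^ 2 / (1 - m))).congr fun j => ?_
      rw [pow_mul, pow_succ]
      ring
    set K : ℝ := ∑' j : ℕ, 4 * (q ^ (2 * (j + 1)) / s ^ 2) / (1 - m) with hK
    have hSbound : ∀ r ∈ Set.Ioo q 1, s ≤ r → |∑' j, mgS q r j| ≤ K := by
      intro r hr hsr
      have hg := mgS_summable hq0 hq1 hr
      calc |∑' j, mgS q r j| ≤ ∑' j, ‖mgS q r j‖ := by
            simpa [Real.norm_eq_abs] using norm_tsum_le_tsum_norm hg.norm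
        _ ≤ K := by
            refine Summable.tsum_le_tsum (fun j => ?_) hg.norm hbsum
            have hp1 : q ^ (2 * (j + 1)) / s ^ 2 ≤ m := by
              rw [hm]
              have h2j : q ^ (2 * (j + 1)) ≤ q ^ 2 :=
                pow_le_pow_of_le_one hq0.le hq1.le (by omega)
              exact (div_le_div_iff_of_pos_right (by positivity)).2 h2j
            simpa [mgS, Real.norm_eq_abs, abs_mul, abs_pow] using
              abs_log_mcf_le' hq0 hs0 hsr hr.2.le hp1 hm1
    have hmaj : Filter.Tendsto (fun r : ℝ => (1 - r ^ 2) * Real.exp K)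
        (nhdsWithin 1 (Set.Ioo q 1)) (nhds 0) := by
      have h0 : Filter.Tendsto (fun r : ℝ => (1 - r ^ 2) * Real.exp K) (nhds 1) (nhds 0) := by
        have hcont : Continuous (fun r : ℝ => (1 - r ^ 2) * Real.exp K) := by fun_prop
        have h0 := hcont.tendsto 1
        rw [show (1 - (1 : ℝ) ^ 2) * Real.exp K = 0 by norm_num] at h0
        exact h0
      exact h0.mono_left nhdsWithin_le_nhds
    refine squeeze_zero_norm' ?_ hmaj
    filter_upwards [self_mem_nhdsWithin,
      mem_nhdsWithin_of_mem_nhds (Ioi_mem_nhds hs1)] with r hr hsr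
    rw [mityukRadiusRad_eq hq0 hq1 hr]
    have h1r : 0 ≤ 1 - r ^ 2 := by nlinarith [hr.2, hq0.trans hr.1]
    rw [Real.norm_eq_abs, abs_mul, abs_of_nonneg h1r, abs_of_pos (Real.exp_pos _)]
    have := hSbound r hr (le_of_lt hsr)
    have hSle : ∑' j, mgS q r j ≤ K := (le_abs_self _).trans this
    exact mul_le_mul_of_nonneg_left (Real.exp_le_exp.2 hSle) h1r
  · -- limit at q
    have hmm : 0 < 1 - q ^ 2 := by linarith
    have hbsum : Summable (fun j : ℕ => 4 * (q ^ (2 * (j + 2)) / q ^ 2) / (1 - q ^ 2)) := by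
      refine ((summable_geometric_of_lt_one (by positivity) hq2).mul_left
        (4 * q ^ 2 / (1 - q ^ 2))).congr fun j => ?_
      have : q ^ (2 * (j + 2)) = q ^ 2 * ((q ^ 2) ^ j * q ^ 2) := by
        rw [pow_mul]; ring
      rw [this]
      field_simp
    set K' : ℝ := ∑' j : ℕ, 4 * (q ^ (2 * (j + 2)) / q ^ 2) / (1 - q ^ 2) with hK'
    have hTbound : ∀ r ∈ Set.Ioo q 1, |∑' j, mgS q r (j + 1)| ≤ K' := by
      intro r hr
      have hg := (mgS_summable hq0 hq1 hr).comp_injective (add_left_injective 1)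
      have hg' : Summable fun j : ℕ => mgS q r (j + 1) := hg
      calc |∑' j, mgS q r (j + 1)| ≤ ∑' j, ‖mgS q r (j + 1)‖ := by
            simpa [Real.norm_eq_abs] using norm_tsum_le_tsum_norm hg'.norm
        _ ≤ K' := by
            refine Summable.tsum_le_tsum (fun j => ?_) hg'.norm hbsum
            have hp1 : q ^ (2 * (j + 2)) / q ^ 2 ≤ q ^ 2 := by
              rw [div_le_iff₀ (by positivity)]
              calc q ^ (2 * (j + 2)) ≤ q ^ 4 :=
                    pow_le_pow_of_le_one hq0.le hq1.le (by omega)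
                _ = q ^ 2 * q ^ 2 := by ring
            simpa [mgS, Real.norm_eq_abs, abs_mul, abs_pow] using
              abs_log_mcf_le' hq0 hq0 hr.1.le hr.2.le hp1 hq2
    -- c₁ := mcf q r 1 tends to 0 from the right
    have hc1cont : ContinuousAt (fun r : ℝ => mcf q r 1) q := by
      have hq2ne : (q : ℝ) ^ (2 * 1) ≠ 0 := by positivity
      unfold mcf
      refine ContinuousAt.div ?_ continuousAt_const (by positivity)
      refine ContinuousAt.mul (by fun_prop) ?_
      refine ContinuousAt.sub continuousAt_const ?_
      exact ContinuousAt.div continuousAt_const (by fun_prop) (by positivity)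
    have hc1q : mcf q q 1 = 0 := by
      have hq2ne : (q : ℝ) ^ 2 ≠ 0 := by positivity
      simp [mcf, div_self hq2ne]
    have htend0 : Filter.Tendsto (fun r : ℝ => mcf q r 1) (nhdsWithin q (Set.Ioo q 1))
        (nhdsWithin 0 (Set.Ioi 0)) := by
      apply tendsto_nhdsWithin_of_tendsto_nhds_of_eventually_within
      · have := hc1cont.tendsto
        rw [hc1q] at this
        exact this.mono_left nhdsWithin_le_nhds
      · filter_upwards [self_mem_nhdsWithin] with r hr
        exact mcf_pos hq0 hq1 hr le_rfl
    have hinv : Filter.Tendsto (fun r : ℝ => (mcf q r 1)⁻¹)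
        (nhdsWithin q (Set.Ioo q 1)) Filter.atTop :=
      tendsto_inv_nhdsGT_zero.comp htend0
    have hconst : Filter.Tendsto
        (fun r : ℝ => (1 - s ^ 2) * Real.exp (-K') * (mcf q r 1)⁻¹)
        (nhdsWithin q (Set.Ioo q 1)) Filter.atTop := by
      refine hinv.const_mul_atTop ?_
      have : 0 < 1 - s ^ 2 := by nlinarith
      positivity
    refine tendsto_atTop_mono' _ ?_ hconst
    filter_upwards [self_mem_nhdsWithin,
      mem_nhdsWithin_of_mem_nhds (Iio_mem_nhds hqs)] with r hr hrs
    have hc1 : 0 < mcf q r 1 := mcf_pos hq0 hq1 hr le_rfl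
    have hg := mgS_summable hq0 hq1 hr
    have hsplit : ∑' j, mgS q r j = mgS q r 0 + ∑' j, mgS q r (j + 1) :=
      Summable.tsum_eq_zero_add hg
    have h0 : mgS q r 0 = -Real.log (mcf q r 1) := by
      simp [mgS]
    rw [mityukRadiusRad_eq hq0 hq1 hr, hsplit, h0]
    have hre : Real.exp (-Real.log (mcf q r 1) + ∑' j, mgS q r (j + 1))
        = (mcf q r 1)⁻¹ * Real.exp (∑' j, mgS q r (j + 1)) := by
      rw [Real.exp_add, Real.exp_neg, Real.exp_log hc1]
    rw [hre]
    have hT := hTbound r hr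
    have hTge : -K' ≤ ∑' j, mgS q r (j + 1) := by
      have := neg_abs_le (∑' j, mgS q r (j + 1))
      linarith
    have h1r : 1 - s ^ 2 ≤ 1 - r ^ 2 := by
      nlinarith [Set.mem_Iio.mp hrs, hq0.trans hr.1]
    have h1s : 0 < 1 - s ^ 2 := by nlinarith
    have h2 : (1 - s ^ 2) * Real.exp (-K') ≤ (1 - r ^ 2) * Real.exp (∑' j, mgS q r (j + 1)) :=
      mul_le_mul h1r (Real.exp_le_exp.2 hTge) (Real.exp_pos _).le (by linarith)
    calc (1 - s ^ 2) * Real.exp (-K') * (mcf q r 1)⁻¹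
        ≤ (1 - r ^ 2) * Real.exp (∑' j, mgS q r (j + 1)) * (mcf q r 1)⁻¹ :=
          mul_le_mul_of_nonneg_right h2 (inv_nonneg.2 hc1.le)
      _ = (1 - r ^ 2) * ((mcf q r 1)⁻¹ * Real.exp (∑' j, mgS q r (j + 1))) := by ring
end

section
/- Fix 0 < q < 1 and let R(r) = (1 − r²) ∏_{j=1}^{∞} [(1 − q^{2j} r²)(1 − q^{2j}/r²)]/(1 − q^{2j})² for r ∈ (q,1). Then R is differentiable on (q,1) and r = √q is a critical point of R, i.e. R'(√q) = 0. -/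
/-- Mityuk's radius for the annulus `{q < |z| < 1}` with respect to the circular-slit
canonical domain: `R(r) = (1 − r²) ∏_{j=1}^∞ (1 − q^{2j} r²)(1 − q^{2j}/r²)/(1 − q^{2j})²`. -/
noncomputable def mityukRadiusCirc (q r : ℝ) : ℝ :=
  (1 - r ^ 2) *
    ∏' j : ℕ,
      ((1 - q ^ (2 * (j + 1)) * r ^ 2) * (1 - q ^ (2 * (j + 1)) / r ^ 2)) /
        (1 - q ^ (2 * (j + 1))) ^ 2

open Real Set

noncomputable def mcAux (q : ℝ) (j : ℕ) : ℝ := q ^ (2 * (j + 1))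

noncomputable def mhAux (q : ℝ) (j : ℕ) (r : ℝ) : ℝ :=
  Real.log (1 - mcAux q j * r ^ 2) + Real.log (1 - mcAux q j / r ^ 2)
    - Real.log ((1 - mcAux q j) ^ 2)

noncomputable def mSAux (q r : ℝ) : ℝ := ∑' j, mhAux q j r

lemma mcAux_pos {q : ℝ} (hq0 : 0 < q) (j : ℕ) : 0 < mcAux q j := pow_pos hq0 _

lemma mcAux_le {q : ℝ} (hq0 : 0 ≤ q) (hq1 : q ≤ 1) (j : ℕ) : mcAux q j ≤ q ^ 2 := by
  unfold mcAux
  calc q ^ (2 * (j + 1)) ≤ q ^ 2 := by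
        apply pow_le_pow_of_le_one hq0 hq1; omega

lemma summable_mcAux {q : ℝ} (hq0 : 0 ≤ q) (hq1 : q < 1) : Summable (mcAux q) := by
  have h : mcAux q = fun j => q ^ 2 * (q ^ 2) ^ j := by
    funext j; unfold mcAux
    rw [← pow_mul]; ring_nf
  rw [h]
  exact (summable_geometric_of_lt_one (by positivity) (by nlinarith)).mul_left _

/-- comparison lemma for logs -/
lemma summable_log_one_sub_aux {x : ℕ → ℝ} {M : ℝ} (hM : M < 1)
    (h0 : ∀ j, 0 ≤ x j) (hxM : ∀ j, x j ≤ M) (hs : Summable x) :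
    Summable fun j => Real.log (1 - x j) := by
  have hM0 : 0 < 1 - M := by linarith
  apply Summable.of_norm_bounded (g := fun j => (1 - M)⁻¹ * x j) (hs.mul_left _)
  intro j
  have h1 : 0 < 1 - x j := by have := hxM j; linarith
  have h2 : Real.log (1 - x j) ≤ 0 := Real.log_nonpos (by linarith [h0 j]) (by linarith [h0 j])
  rw [Real.norm_eq_abs, abs_of_nonpos h2]
  have h3 : -Real.log (1 - x j) = Real.log (1 - x j)⁻¹ := (Real.log_inv _).symm
  rw [h3]
  have h4 : Real.log (1 - x j)⁻¹ ≤ (1 - x j)⁻¹ - 1 :=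
    Real.log_le_sub_one_of_pos (by positivity)
  have h5 : (1 - x j)⁻¹ - 1 = x j * (1 - x j)⁻¹ := by
    field_simp
    ring
  have h6 : x j * (1 - x j)⁻¹ ≤ x j * (1 - M)⁻¹ := by
    apply mul_le_mul_of_nonneg_left _ (h0 j)
    exact inv_anti₀ hM0 (by linarith [hxM j])
  linarith

lemma q2lt1 {q : ℝ} (hq0 : 0 < q) (hq1 : q < 1) : q ^ 2 < 1 := by nlinarith

lemma pos1 {q r : ℝ} (hq0 : 0 < q) (hq1 : q < 1) (hr : r ∈ Ioo q 1) (j : ℕ) :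
    0 < 1 - mcAux q j * r ^ 2 := by
  have h1 := mcAux_le hq0.le hq1.le j
  have h2 : r ^ 2 ≤ 1 := by nlinarith [hr.1, hr.2, hq0]
  have h3 := mcAux_pos hq0 j
  nlinarith [q2lt1 hq0 hq1]

lemma pos2 {q r : ℝ} (hq0 : 0 < q) (hq1 : q < 1) (hr : r ∈ Ioo q 1) (j : ℕ) :
    0 < 1 - mcAux q j / r ^ 2 := by
  have hrp : 0 < r := lt_trans hq0 hr.1
  have h1 := mcAux_le hq0.le hq1.le j
  have h2 : q ^ 2 < r ^ 2 := by nlinarith [hr.1]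
  have h4 : mcAux q j / r ^ 2 < 1 := by
    rw [div_lt_one (by positivity)]; linarith
  linarith

lemma pos3 {q : ℝ} (hq0 : 0 < q) (hq1 : q < 1) (j : ℕ) : 0 < 1 - mcAux q j := by
  have h1 := mcAux_le hq0.le hq1.le j
  nlinarith [q2lt1 hq0 hq1]

lemma summable1 {q r : ℝ} (hq0 : 0 < q) (hq1 : q < 1) (hr : r ∈ Ioo q 1) :
    Summable fun j => Real.log (1 - mcAux q j * r ^ 2) := by
  have hrp : 0 < r := lt_trans hq0 hr.1
  apply summable_log_one_sub_aux (q2lt1 hq0 hq1)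
    (fun j => mul_nonneg (mcAux_pos hq0 j).le (by positivity))
    (fun j => ?_) ((summable_mcAux hq0.le hq1).mul_right _)
  have h1 := mcAux_le hq0.le hq1.le j
  have h2 : r ^ 2 ≤ 1 := by nlinarith [hr.2]
  nlinarith [mcAux_pos hq0 j]

lemma summable2 {q r : ℝ} (hq0 : 0 < q) (hq1 : q < 1) (hr : r ∈ Ioo q 1) :
    Summable fun j => Real.log (1 - mcAux q j / r ^ 2) := by
  have hrp : 0 < r := lt_trans hq0 hr.1
  have h2 : q ^ 2 < r ^ 2 := by nlinarith [hr.1]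
  have hM : q ^ 2 / r ^ 2 < 1 := by rw [div_lt_one (by positivity)]; linarith
  apply summable_log_one_sub_aux hM (fun j => div_nonneg (mcAux_pos hq0 j).le (by positivity))
    (fun j => ?_) ((summable_mcAux hq0.le hq1).div_const _)
  exact div_le_div_of_nonneg_right (mcAux_le hq0.le hq1.le j) (by positivity)

lemma summable3 {q : ℝ} (hq0 : 0 < q) (hq1 : q < 1) :
    Summable fun j => Real.log ((1 - mcAux q j) ^ 2) := by
  have h : (fun j => Real.log ((1 - mcAux q j) ^ 2))
      = fun j => (2 : ℝ) * Real.log (1 - mcAux q j) := by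
    funext j; rw [Real.log_pow]; norm_num
  rw [h]
  exact (summable_log_one_sub_aux (q2lt1 hq0 hq1) (fun j => (mcAux_pos hq0 j).le)
    (mcAux_le hq0.le hq1.le) (summable_mcAux hq0.le hq1)).mul_left _

lemma summableh {q r : ℝ} (hq0 : 0 < q) (hq1 : q < 1) (hr : r ∈ Ioo q 1) :
    Summable fun j => mhAux q j r :=
  ((summable1 hq0 hq1 hr).add (summable2 hq0 hq1 hr)).sub (summable3 hq0 hq1)

lemma summableA {q r : ℝ} (hq0 : 0 < q) (hq1 : q < 1) (hr : r ∈ Ioo q 1) :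
    Summable fun j : ℕ => Real.log (1 - q ^ (2 * j) * r ^ 2) := by
  have hrp : 0 < r := lt_trans hq0 hr.1
  have hM : r ^ 2 < 1 := by nlinarith [hr.2]
  have hsum : Summable fun j : ℕ => q ^ (2 * j) * r ^ 2 := by
    refine ((summable_geometric_of_lt_one (by positivity : (0:ℝ) ≤ q ^ 2)
      (q2lt1 hq0 hq1)).mul_right (r ^ 2)).congr fun j => ?_
    rw [pow_mul]
  refine summable_log_one_sub_aux hM (fun j => by positivity) (fun j => ?_) hsum
  have h1 : q ^ (2 * j) ≤ 1 := pow_le_one₀ hq0.le hq1.le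
  nlinarith [sq_nonneg r, pow_pos hq0 (2 * j)]

lemma key1 {q r : ℝ} (hq0 : 0 < q) (hq1 : q < 1) (hr : r ∈ Ioo q 1) :
    mityukRadiusCirc q r = (1 - r ^ 2) * Real.exp (mSAux q r) := by
  unfold mityukRadiusCirc
  congr 1
  apply HasProd.tprod_eq
  have hp := (summableh hq0 hq1 hr).hasSum.rexp
  have hfe : (rexp ∘ fun j => mhAux q j r) = fun j : ℕ =>
      ((1 - q ^ (2 * (j + 1)) * r ^ 2) * (1 - q ^ (2 * (j + 1)) / r ^ 2)) /
        (1 - q ^ (2 * (j + 1))) ^ 2 := by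
    funext j
    have e1 := pos1 hq0 hq1 hr j
    have e2 := pos2 hq0 hq1 hr j
    have e3 := pos3 hq0 hq1 j
    simp only [Function.comp_apply, mhAux]
    rw [Real.exp_sub, Real.exp_add, Real.exp_log e1, Real.exp_log e2,
      Real.exp_log (pow_pos e3 2)]
    rfl
  rw [← hfe]
  exact hp

lemma hUrepr {q r : ℝ} (hq0 : 0 < q) (hq1 : q < 1) (hr : r ∈ Ioo q 1) :
    Real.log (1 - r ^ 2) + mSAux q r
      = (∑' j : ℕ, Real.log (1 - q ^ (2 * j) * r ^ 2))
        + (∑' j, Real.log (1 - mcAux q j / r ^ 2))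
        - (∑' j, Real.log ((1 - mcAux q j) ^ 2)) := by
  have h1 := summable1 hq0 hq1 hr
  have h2 := summable2 hq0 hq1 hr
  have h3 := summable3 hq0 hq1
  have hA := summableA hq0 hq1 hr
  have e1 : mSAux q r = (∑' j, Real.log (1 - mcAux q j * r ^ 2))
      + (∑' j, Real.log (1 - mcAux q j / r ^ 2))
      - ∑' j, Real.log ((1 - mcAux q j) ^ 2) := by
    unfold mSAux mhAux
    rw [Summable.tsum_sub (h1.add h2) h3, Summable.tsum_add h1 h2]
  have e2 : (∑' j : ℕ, Real.log (1 - q ^ (2 * j) * r ^ 2))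
      = Real.log (1 - r ^ 2) + ∑' j, Real.log (1 - mcAux q j * r ^ 2) := by
    rw [Summable.tsum_eq_zero_add hA]
    congr 1
    norm_num
  rw [e1, e2]; ring

lemma symmU {q r : ℝ} (hq0 : 0 < q) (hq1 : q < 1) (hr : r ∈ Ioo q 1) :
    Real.log (1 - (q / r) ^ 2) + mSAux q (q / r)
      = Real.log (1 - r ^ 2) + mSAux q r := by
  have hrp : 0 < r := lt_trans hq0 hr.1
  have hrne : r ≠ 0 := hrp.ne'
  have hqne : q ≠ 0 := hq0.ne'
  have hqr : q / r ∈ Ioo q 1 := by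
    constructor
    · rw [lt_div_iff₀ hrp]; nlinarith [hr.2]
    · rw [div_lt_one hrp]; exact hr.1
  rw [hUrepr hq0 hq1 hqr, hUrepr hq0 hq1 hr]
  have eA : (∑' j : ℕ, Real.log (1 - q ^ (2 * j) * (q / r) ^ 2))
      = ∑' j, Real.log (1 - mcAux q j / r ^ 2) := by
    refine tsum_congr fun j => ?_
    congr 1
    unfold mcAux
    field_simp
    ring
  have eB : (∑' j, Real.log (1 - mcAux q j / (q / r) ^ 2))
      = ∑' j : ℕ, Real.log (1 - q ^ (2 * j) * r ^ 2) := by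
    refine tsum_congr fun j => ?_
    congr 1
    unfold mcAux
    field_simp
    ring
  rw [eA, eB]; ring

lemma qdivr_mem {q r : ℝ} (hq0 : 0 < q) (hq1 : q < 1) (hr : r ∈ Ioo q 1) :
    q / r ∈ Ioo q 1 := by
  have hrp : 0 < r := lt_trans hq0 hr.1
  constructor
  · rw [lt_div_iff₀ hrp]; nlinarith [hr.2]
  · rw [div_lt_one hrp]; exact hr.1

lemma key2 {q r : ℝ} (hq0 : 0 < q) (hq1 : q < 1) (hr : r ∈ Ioo q 1) :
    mityukRadiusCirc q (q / r) = mityukRadiusCirc q r := by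
  have hqr := qdivr_mem hq0 hq1 hr
  rw [key1 hq0 hq1 hqr, key1 hq0 hq1 hr]
  have h := symmU hq0 hq1 hr
  have p1 : 0 < 1 - (q / r) ^ 2 := by nlinarith [hqr.1, hqr.2, hq0]
  have p2 : 0 < 1 - r ^ 2 := by nlinarith [hr.1, hr.2, hq0]
  calc (1 - (q / r) ^ 2) * rexp (mSAux q (q / r))
      = rexp (Real.log (1 - (q / r) ^ 2) + mSAux q (q / r)) := by
        rw [Real.exp_add, Real.exp_log p1]
    _ = rexp (Real.log (1 - r ^ 2) + mSAux q r) := by rw [h]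
    _ = (1 - r ^ 2) * rexp (mSAux q r) := by rw [Real.exp_add, Real.exp_log p2]

noncomputable def mh' (q : ℝ) (j : ℕ) (y : ℝ) : ℝ :=
  -(mcAux q j * (2 * y ^ 1)) / (1 - mcAux q j * y ^ 2) +
    -(mcAux q j * (-(2 * y ^ 1) / ((y ^ 2) ^ 2))) / (1 - mcAux q j * (y ^ 2)⁻¹)

lemma mh_hasDeriv {q : ℝ} (hq0 : 0 < q) (hq1 : q < 1) (j : ℕ) {y : ℝ}
    (hy : y ∈ Ioo q 1) : HasDerivAt (fun z => mhAux q j z) (mh' q j y) y := by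
  have hyp : 0 < y := lt_trans hq0 hy.1
  have p1 := pos1 hq0 hq1 hy j
  have p2 := pos2 hq0 hq1 hy j
  have p2' : 0 < 1 - mcAux q j * (y ^ 2)⁻¹ := by
    rwa [← div_eq_mul_inv]
  have efun : (fun z => mhAux q j z) = fun z =>
      Real.log (1 - mcAux q j * z ^ 2) + Real.log (1 - mcAux q j * (z ^ 2)⁻¹)
        - Real.log ((1 - mcAux q j) ^ 2) := by
    funext z; rw [mhAux, div_eq_mul_inv]
  rw [efun]
  have H1 : HasDerivAt (fun z : ℝ => 1 - mcAux q j * z ^ 2)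
      (-(mcAux q j * (2 * y ^ 1))) y :=
    ((hasDerivAt_pow 2 y).const_mul (mcAux q j)).const_sub 1
  have H2 : HasDerivAt (fun z : ℝ => 1 - mcAux q j * (z ^ 2)⁻¹)
      (-(mcAux q j * (-(2 * y ^ 1) / ((y ^ 2) ^ 2)))) y :=
    (((hasDerivAt_pow 2 y).inv (by positivity)).const_mul (mcAux q j)).const_sub 1
  exact ((H1.log p1.ne').add (H2.log p2'.ne')).sub_const _

lemma mh'_bound {q a b : ℝ} (hq0 : 0 < q) (hq1 : q < 1) (ha : q < a) (hb : b ≤ 1)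
    (j : ℕ) {y : ℝ} (hy : y ∈ Ioo a b) :
    ‖mh' q j y‖ ≤ (2 / (1 - q ^ 2) + (2 / a ^ 3) / (1 - q ^ 2 / a ^ 2)) * mcAux q j := by
  have hap : 0 < a := lt_trans hq0 ha
  have hyI : y ∈ Ioo q 1 := ⟨lt_trans ha hy.1, lt_of_lt_of_le hy.2 hb⟩
  have hyp : 0 < y := lt_trans hq0 hyI.1
  have hy1 : y ≤ 1 := hyI.2.le
  have hay : a ≤ y := hy.1.le
  have hmc := mcAux_pos hq0 j
  have hmcle := mcAux_le hq0.le hq1.le j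
  have hq2 : q ^ 2 < 1 := q2lt1 hq0 hq1
  have p1 := pos1 hq0 hq1 hyI j
  have p2 := pos2 hq0 hq1 hyI j
  have p2' : 0 < 1 - mcAux q j * (y ^ 2)⁻¹ := by rwa [← div_eq_mul_inv]
  have hm2 : 0 < 1 - q ^ 2 / a ^ 2 := by
    have : q ^ 2 / a ^ 2 < 1 := by
      rw [div_lt_one (by positivity)]; nlinarith
    linarith
  have hy2 : y ^ 2 ≤ 1 := by nlinarith
  -- first term
  have hT1 : |(-(mcAux q j * (2 * y ^ 1))) / (1 - mcAux q j * y ^ 2)|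
      ≤ 2 * mcAux q j / (1 - q ^ 2) := by
    rw [abs_div, abs_of_pos p1, abs_neg, abs_of_pos (by positivity)]
    apply div_le_div₀ (by positivity) (by nlinarith) (by linarith)
    nlinarith [mul_le_mul_of_nonneg_left hy2 hmc.le]
  -- second term
  have hNeq : -(mcAux q j * (-(2 * y ^ 1) / ((y ^ 2) ^ 2)))
      = mcAux q j * (2 * y) / (y ^ 2) ^ 2 := by ring
  have hT2 : |(-(mcAux q j * (-(2 * y ^ 1) / ((y ^ 2) ^ 2)))) / (1 - mcAux q j * (y ^ 2)⁻¹)|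
      ≤ (2 * mcAux q j / a ^ 3) / (1 - q ^ 2 / a ^ 2) := by
    rw [abs_div, abs_of_pos p2', hNeq, abs_of_pos (by positivity)]
    apply div_le_div₀ (by positivity) ?_ hm2 ?_
    · rw [div_le_div_iff₀ (by positivity) (by positivity)]
      have h3 : a ^ 3 ≤ y ^ 3 := pow_le_pow_left₀ hap.le hay 3
      nlinarith [mul_nonneg (mul_nonneg hmc.le hyp.le) (sub_nonneg.2 h3)]
    · have : mcAux q j * (y ^ 2)⁻¹ ≤ q ^ 2 / a ^ 2 := by
        rw [← div_eq_mul_inv]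
        apply div_le_div₀ (by positivity) hmcle (by positivity)
        nlinarith
      linarith
  calc ‖mh' q j y‖ ≤ |(-(mcAux q j * (2 * y ^ 1))) / (1 - mcAux q j * y ^ 2)|
        + |(-(mcAux q j * (-(2 * y ^ 1) / ((y ^ 2) ^ 2)))) / (1 - mcAux q j * (y ^ 2)⁻¹)| := by
        rw [mh', Real.norm_eq_abs]; exact abs_add_le _ _
    _ ≤ 2 * mcAux q j / (1 - q ^ 2) + (2 * mcAux q j / a ^ 3) / (1 - q ^ 2 / a ^ 2) :=
        add_le_add hT1 hT2
    _ = (2 / (1 - q ^ 2) + (2 / a ^ 3) / (1 - q ^ 2 / a ^ 2)) * mcAux q j := by ring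

lemma diffS {q r0 : ℝ} (hq0 : 0 < q) (hq1 : q < 1) (hr0 : r0 ∈ Ioo q 1) :
    DifferentiableAt ℝ (fun r => mSAux q r) r0 := by
  set a := (q + r0) / 2 with ha_def
  set b := (r0 + 1) / 2 with hb_def
  have ha : q < a := by rw [ha_def]; linarith [hr0.1]
  have har : a < r0 := by rw [ha_def]; linarith [hr0.1]
  have hrb : r0 < b := by rw [hb_def]; linarith [hr0.2]
  have hb : b ≤ 1 := by rw [hb_def]; linarith [hr0.2]
  have hmem : r0 ∈ Ioo a b := ⟨har, hrb⟩
  have hsub : Ioo a b ⊆ Ioo q 1 := fun y hy =>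
    ⟨lt_trans ha hy.1, lt_of_lt_of_le hy.2 hb⟩
  have husum : Summable fun j =>
      (2 / (1 - q ^ 2) + (2 / a ^ 3) / (1 - q ^ 2 / a ^ 2)) * mcAux q j :=
    (summable_mcAux hq0.le hq1).mul_left _
  have H := hasDerivAt_tsum_of_isPreconnected husum isOpen_Ioo isPreconnected_Ioo
    (fun j y hy => mh_hasDeriv hq0 hq1 j (hsub hy))
    (fun j y hy => mh'_bound hq0 hq1 ha hb j hy)
    hmem (summableh hq0 hq1 hr0) hmem
  exact H.differentiableAt

/-- For `0 < q < 1`, `R` is differentiable on `(q,1)` and `r = √q` is a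
critical point of `R`, i.e. `R'(√q) = 0`. -/
theorem mityuk_stmt8 (q : ℝ) (hq0 : 0 < q) (hq1 : q < 1) :
    DifferentiableOn ℝ (mityukRadiusCirc q) (Set.Ioo q 1) ∧
    deriv (mityukRadiusCirc q) (Real.sqrt q) = 0 := by
  have hdiffOn : DifferentiableOn ℝ (mityukRadiusCirc q) (Set.Ioo q 1) := by
    intro r0 hr0
    have hG : DifferentiableAt ℝ (fun r => (1 - r ^ 2) * Real.exp (mSAux q r)) r0 := by
      have h1 : DifferentiableAt ℝ (fun r : ℝ => 1 - r ^ 2) r0 :=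
        (differentiableAt_const 1).sub (differentiableAt_pow 2)
      exact h1.mul (diffS hq0 hq1 hr0).exp
    exact (hG.differentiableWithinAt).congr
      (fun y hy => key1 hq0 hq1 hy) (key1 hq0 hq1 hr0)
  refine ⟨hdiffOn, ?_⟩
  have hs : Real.sqrt q ∈ Ioo q 1 := by
    constructor
    · exact (Real.lt_sqrt hq0.le).2 (by nlinarith)
    · exact (Real.sqrt_lt' one_pos).2 (by linarith)
  have hsp : 0 < Real.sqrt q := Real.sqrt_pos.2 hq0
  have hsq : Real.sqrt q ^ 2 = q := Real.sq_sqrt hq0.le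
  have hd : HasDerivAt (mityukRadiusCirc q) (deriv (mityukRadiusCirc q) (Real.sqrt q))
      (Real.sqrt q) :=
    (hdiffOn.differentiableAt (isOpen_Ioo.mem_nhds hs)).hasDerivAt
  set d := deriv (mityukRadiusCirc q) (Real.sqrt q) with hd_def
  -- the map r ↦ q * r⁻¹ has derivative -1 at √q
  have hφ : HasDerivAt (fun r : ℝ => q * r⁻¹) (-1) (Real.sqrt q) := by
    have h := (hasDerivAt_inv hsp.ne').const_mul q
    have hval : q * -(Real.sqrt q ^ 2)⁻¹ = -1 := by
      rw [hsq]; field_simp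
    rwa [hval] at h
  have hfix : q * (Real.sqrt q)⁻¹ = Real.sqrt q := by
    rw [mul_inv_eq_iff_eq_mul₀ hsp.ne']
    nlinarith [hsq]
  have hcomp : HasDerivAt (fun r => mityukRadiusCirc q (q * r⁻¹)) (d * (-1))
      (Real.sqrt q) := by
    have := HasDerivAt.comp (Real.sqrt q) (hfix ▸ hd) hφ
    simpa [Function.comp_def] using this
  have heq : (fun r => mityukRadiusCirc q (q * r⁻¹)) =ᶠ[nhds (Real.sqrt q)]
      mityukRadiusCirc q := by
    filter_upwards [isOpen_Ioo.mem_nhds hs] with r hrm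
    rw [← div_eq_mul_inv]
    exact key2 hq0 hq1 hrm
  have h1 : deriv (fun r => mityukRadiusCirc q (q * r⁻¹)) (Real.sqrt q) = d :=
    heq.deriv_eq
  have h2 : deriv (fun r => mityukRadiusCirc q (q * r⁻¹)) (Real.sqrt q) = d * (-1) :=
    hcomp.deriv
  rw [h1] at h2
  linarith
end
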